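/- Let μ and ν be probability measures on ℝ, each with integrable identity function of mean zero, with ν((-∞,0)) > 0 and ν((0,∞)) > 0. Let F > 0, H < 0 and C be real numbers and define the risky marginal profit π_x(θ,ω) = (B + θ)·F + ω·H − C for a real constant B. Then, under the product measure μ ⊗ ν, the difference of conditional expectations of π_x over the bad extraction state {ω < 0} and the good extraction state {ω > 0} equals H·[(∫_{(-∞,0)} ω dν)/ν((-∞,0)) − (∫_{(0,∞)} ω dν)/ν((0,∞))], and is strictly positive. (Lemma 3.1, risk-decreasing case: for risk-decreasing inputs, expected marginal profit is higher in the bad state when insurance contracts are built on the extraction shock ω.) -/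

import Mathlib

open MeasureTheory Set

lemma aux_prod_int (μ ν : Measure ℝ) [IsProbabilityMeasure μ] [IsProbabilityMeasure ν]
    (hIntμ : Integrable id μ) (hmeanμ : ∫ θ, θ ∂μ = 0)
    (hIntν : Integrable id ν) (B F H C : ℝ) (S : Set ℝ) :
    ∫ p in (univ : Set ℝ) ×ˢ S, ((B + p.1) * F + p.2 * H - C) ∂(μ.prod ν)
      = (B * F - C) * (ν S).toReal + H * ∫ ω in S, ω ∂ν := by
  have h1 : IntegrableOn (fun p : ℝ × ℝ => ((B + p.1) * F - C) * (1 : ℝ))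
      ((univ : Set ℝ) ×ˢ S) (μ.prod ν) := by
    rw [IntegrableOn, ← Measure.prod_restrict]
    refine Integrable.mul_prod (f := fun θ : ℝ => (B + θ) * F - C)
      (g := fun _ : ℝ => (1 : ℝ)) ?_ (integrable_const 1)
    have : (fun θ : ℝ => (B + θ) * F - C) = fun θ => θ * F + (B * F - C) := by
      funext θ; ring
    rw [this]
    have hint : Integrable (fun θ : ℝ => θ * F) (μ.restrict univ) := hIntμ.restrict.mul_const F
    exact hint.add (integrable_const _)
  have h2 : IntegrableOn (fun p : ℝ × ℝ => (1 : ℝ) * (p.2 * H))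
      ((univ : Set ℝ) ×ˢ S) (μ.prod ν) := by
    rw [IntegrableOn, ← Measure.prod_restrict]
    exact Integrable.mul_prod (f := fun _ : ℝ => (1 : ℝ))
      (g := fun ω : ℝ => ω * H) (integrable_const 1) ((hIntν.restrict).mul_const H)
  have heq : (fun p : ℝ × ℝ => (B + p.1) * F + p.2 * H - C)
      = fun p => ((B + p.1) * F - C) * 1 + 1 * (p.2 * H) := by
    funext p; ring
  rw [heq, integral_add h1 h2,
    setIntegral_prod_mul (fun θ : ℝ => (B + θ) * F - C) (fun _ : ℝ => (1 : ℝ)),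
    setIntegral_prod_mul (fun _ : ℝ => (1 : ℝ)) (fun ω : ℝ => ω * H)]
  have e1 : ∫ θ in (univ : Set ℝ), ((B + θ) * F - C) ∂μ = B * F - C := by
    rw [Measure.restrict_univ]
    have : (fun θ : ℝ => (B + θ) * F - C) = fun θ => θ * F + (B * F - C) := by
      funext θ; ring
    have hint : Integrable (fun θ : ℝ => θ * F) μ := hIntμ.mul_const F
    rw [this, integral_add hint (integrable_const _), integral_mul_const, integral_const]
    simp [hmeanμ]
  have e2 : ∫ ω in S, (1 : ℝ) ∂ν = (ν S).toReal := by simp; rfl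
  have e3 : ∫ θ in (univ : Set ℝ), (1 : ℝ) ∂μ = 1 := by simp
  have e4 : ∫ ω in S, ω * H ∂ν = (∫ ω in S, ω ∂ν) * H :=
    integral_mul_const _ _
  rw [e1, e2, e3, e4]
  ring

theorem stmt_3 (μ ν : Measure ℝ) [IsProbabilityMeasure μ] [IsProbabilityMeasure ν]
    (hIntμ : Integrable id μ) (hmeanμ : ∫ θ, θ ∂μ = 0)
    (hIntν : Integrable id ν) (hmeanν : ∫ ω, ω ∂ν = 0)
    (hneg : 0 < ν (Iio 0)) (hpos : 0 < ν (Ioi 0))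
    (B F H C : ℝ) (hF : 0 < F) (hH : H < 0) :
    ((∫ p in (univ : Set ℝ) ×ˢ (Iio (0 : ℝ)), ((B + p.1) * F + p.2 * H - C) ∂(μ.prod ν))
        / (ν (Iio 0)).toReal
      - (∫ p in (univ : Set ℝ) ×ˢ (Ioi (0 : ℝ)), ((B + p.1) * F + p.2 * H - C) ∂(μ.prod ν))
        / (ν (Ioi 0)).toReal
      = H * ((∫ ω in Iio (0 : ℝ), ω ∂ν) / (ν (Iio 0)).toReal
          - (∫ ω in Ioi (0 : ℝ), ω ∂ν) / (ν (Ioi 0)).toReal))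
    ∧ 0 < (∫ p in (univ : Set ℝ) ×ˢ (Iio (0 : ℝ)), ((B + p.1) * F + p.2 * H - C) ∂(μ.prod ν))
        / (ν (Iio 0)).toReal
      - (∫ p in (univ : Set ℝ) ×ˢ (Ioi (0 : ℝ)), ((B + p.1) * F + p.2 * H - C) ∂(μ.prod ν))
        / (ν (Ioi 0)).toReal := by
  have mneg : (0 : ℝ) < (ν (Iio 0)).toReal :=
    ENNReal.toReal_pos hneg.ne' (measure_ne_top ν _)
  have mpos : (0 : ℝ) < (ν (Ioi 0)).toReal :=
    ENNReal.toReal_pos hpos.ne' (measure_ne_top ν _)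
  have key : ∀ S : Set ℝ,
      ∫ p in (univ : Set ℝ) ×ˢ S, ((B + p.1) * F + p.2 * H - C) ∂(μ.prod ν)
        = (B * F - C) * (ν S).toReal + H * ∫ ω in S, ω ∂ν :=
    fun S => aux_prod_int μ ν hIntμ hmeanμ hIntν B F H C S
  have hmain :
      (∫ p in (univ : Set ℝ) ×ˢ (Iio (0 : ℝ)), ((B + p.1) * F + p.2 * H - C) ∂(μ.prod ν))
        / (ν (Iio 0)).toReal
      - (∫ p in (univ : Set ℝ) ×ˢ (Ioi (0 : ℝ)), ((B + p.1) * F + p.2 * H - C) ∂(μ.prod ν))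
        / (ν (Ioi 0)).toReal
      = H * ((∫ ω in Iio (0 : ℝ), ω ∂ν) / (ν (Iio 0)).toReal
          - (∫ ω in Ioi (0 : ℝ), ω ∂ν) / (ν (Ioi 0)).toReal) := by
    rw [key (Iio 0), key (Ioi 0)]
    field_simp
    ring
  refine ⟨hmain, ?_⟩
  rw [hmain]
  -- positivity of ∫ over Ioi 0
  have hIpos : 0 < ∫ ω in Ioi (0 : ℝ), ω ∂ν := by
    have hsupp : Function.support (fun ω : ℝ => ω) ∩ Ioi 0 = Ioi 0 := by
      ext x
      simp only [Function.support, mem_inter_iff, mem_setOf_eq, mem_Ioi, and_iff_right_iff_imp]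
      intro h; exact ne_of_gt h
    refine (setIntegral_pos_iff_support_of_nonneg_ae (f := fun ω : ℝ => ω)
      (by filter_upwards [ae_restrict_mem measurableSet_Ioi] with x hx using le_of_lt hx)
      hIntν.integrableOn).mpr ?_
    rw [hsupp]; exact hpos
  have hIneg : ∫ ω in Iio (0 : ℝ), ω ∂ν < 0 := by
    have : 0 < ∫ ω in Iio (0 : ℝ), -ω ∂ν := by
      have hsupp : Function.support (fun ω : ℝ => -ω) ∩ Iio 0 = Iio 0 := by
        ext x
        simp only [Function.support, mem_inter_iff, mem_setOf_eq, mem_Iio, neg_ne_zero,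
          and_iff_right_iff_imp]
        intro h; exact ne_of_lt h
      refine (setIntegral_pos_iff_support_of_nonneg_ae (f := fun ω : ℝ => -ω)
        (by filter_upwards [ae_restrict_mem measurableSet_Iio] with x hx using
          neg_nonneg.mpr (le_of_lt hx))
        (hIntν.neg.integrableOn)).mpr ?_
      rw [hsupp]; exact hneg
    rw [integral_neg] at this
    linarith
  have hbr : (∫ ω in Iio (0 : ℝ), ω ∂ν) / (ν (Iio 0)).toReal
      - (∫ ω in Ioi (0 : ℝ), ω ∂ν) / (ν (Ioi 0)).toReal < 0 := by
    have h1 : (∫ ω in Iio (0 : ℝ), ω ∂ν) / (ν (Iio 0)).toReal < 0 :=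
      div_neg_of_neg_of_pos hIneg mneg
    have h2 : 0 < (∫ ω in Ioi (0 : ℝ), ω ∂ν) / (ν (Ioi 0)).toReal :=
      div_pos hIpos mpos
    linarith
  exact mul_pos_of_neg_of_neg hH hbr
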